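/- arXiv:2401.09151 — 3 statements merged into one kernel-verified Lean document; each statement's English description precedes it below -/
import Mathlib

section
/- Let k be a field of characteristic zero and H a finite-dimensional bialgebra over k. Then P_n(H) = k·1_H for every n ∈ ℕ. In particular, H is conilpotent if and only if H = k·1_H (i.e. dim_k H = 1). -/
open TensorProduct

noncomputable section

universe u

variable (R : Type u) [CommRing R]

/-- `Tpow R H n` is the `n`-th tensor power `H^{⊗n}` of the `R`-module `H`,
defined recursively by `H^{⊗0} = R` and `H^{⊗(n+1)} = H ⊗ H^{⊗n}`. -/
def Tpow (H : Type u) [AddCommGroup H] [Module R H] : ℕ → ModuleCat.{u} R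
  | 0 => ModuleCat.of R R
  | n + 1 => ModuleCat.of R (H ⊗[R] (Tpow H n))

variable {R}
variable {H : Type u} [AddCommGroup H] [Module R H]

/-- The iterated comultiplication `Δ^{(n)} : H → H^{⊗n}`:
`Δ^{(0)} = ε`, `Δ^{(1)} = id` (as the canonical map `H ≅ H ⊗ R`), and
`Δ^{(n+1)} = (Δ ⊗ id^{⊗(n−1)}) ∘ Δ^{(n)}`. -/
def iterComul (Δc : H →ₗ[R] H ⊗[R] H) (εc : H →ₗ[R] R) : (n : ℕ) → (H →ₗ[R] Tpow R H n)
  | 0 => εc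
  | 1 => (TensorProduct.rid R H).symm.toLinearMap
  | n + 2 =>
      (TensorProduct.assoc R H H (Tpow R H n)).toLinearMap
        ∘ₗ (LinearMap.rTensor (Tpow R H n) Δc)
        ∘ₗ (iterComul Δc εc (n + 1))

/-- The `n`-fold tensor power `e^{⊗n} : H^{⊗n} → H^{⊗n}` of a linear endomorphism `e`. -/
def mapPow (e : H →ₗ[R] H) : (n : ℕ) → (Tpow R H n →ₗ[R] Tpow R H n)
  | 0 => LinearMap.id
  | n + 1 => TensorProduct.map e (mapPow e n)

/-- `e_H := id − η ∘ ε`, where `η : R → H` is the coaugmentation `r ↦ r • u` sending `1` to `u`. -/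
def eAug (εc : H →ₗ[R] R) (u : H) : H →ₗ[R] H :=
  LinearMap.id - (LinearMap.toSpanSingleton R H u) ∘ₗ εc

/-- `δ^n := e_H^{⊗n} ∘ Δ^{(n)} : H → H^{⊗n}`. -/
def deltaPow (Δc : H →ₗ[R] H ⊗[R] H) (εc : H →ₗ[R] R) (u : H) (n : ℕ) :
    H →ₗ[R] Tpow R H n :=
  (mapPow (eAug εc u) n) ∘ₗ (iterComul Δc εc n)

/-- The `n`-th term `P_n(H) := ker (δ^{n+1})` of the coradical filtration. -/
def corad (Δc : H →ₗ[R] H ⊗[R] H) (εc : H →ₗ[R] R) (u : H) (n : ℕ) : Submodule R H :=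
  LinearMap.ker (deltaPow Δc εc u (n + 1))

section AuxStuff
open Polynomial Finset
section Aux

variable (k : Type u) [Field k] (H : Type u) [Ring H] [Bialgebra k H]

/-- `e = id - unit ∘ counit` -/
def eH : H →ₗ[k] H := eAug (R := k) Coalgebra.counit (1 : H)

/-- `q = unit ∘ counit` -/
def qH : H →ₗ[k] H := (LinearMap.toSpanSingleton k H 1) ∘ₗ Coalgebra.counit

/-- `D = (e ⊗ e) ∘ Δ` -/
def DH : H →ₗ[k] H ⊗[k] H := (TensorProduct.map (eH k H) (eH k H)) ∘ₗ Coalgebra.comul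

variable {k H}

lemma eH_add_qH : eH k H + qH k H = LinearMap.id := by
  simp [eH, qH, eAug]

lemma eH_apply (x : H) : eH k H x = x - Coalgebra.counit (R := k) x • 1 := by
  simp [eH, eAug]

lemma eH_one : eH k H 1 = 0 := by
  simp [eH_apply]

lemma counit_eH (x : H) : Coalgebra.counit (R := k) (eH k H x) = 0 := by
  simp [eH_apply, map_sub, Bialgebra.counit_one]

lemma DH_comp_eH : DH k H ∘ₗ eH k H = DH k H := by
  ext x
  simp only [LinearMap.comp_apply, DH, eH_apply x, map_sub, map_smul]
  rw [Bialgebra.comul_one, Algebra.TensorProduct.one_def, map_tmul, eH_one]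
  simp

lemma assoc_naturality {A B C A' B' C' : Type u}
    [AddCommGroup A] [AddCommGroup B] [AddCommGroup C]
    [AddCommGroup A'] [AddCommGroup B'] [AddCommGroup C']
    [Module k A] [Module k B] [Module k C] [Module k A'] [Module k B'] [Module k C']
    (f : A →ₗ[k] A') (g : B →ₗ[k] B') (h : C →ₗ[k] C') :
    (TensorProduct.assoc k A' B' C').toLinearMap ∘ₗ
        TensorProduct.map (TensorProduct.map f g) h
      = TensorProduct.map f (TensorProduct.map g h) ∘ₗ
        (TensorProduct.assoc k A B C).toLinearMap := by
  apply TensorProduct.ext_threefold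
  intro x y z
  simp

/-- the key recursion for `δ` -/
lemma deltaPow_succ_succ (n : ℕ) :
    deltaPow (R := k) Coalgebra.comul Coalgebra.counit (1 : H) (n + 2)
      = (TensorProduct.assoc k H H (Tpow k H n)).toLinearMap
        ∘ₗ LinearMap.rTensor (Tpow k H n) (DH k H)
        ∘ₗ deltaPow (R := k) Coalgebra.comul Coalgebra.counit (1 : H) (n + 1) := by
  set E := eH k H
  set P : Tpow k H n →ₗ[k] Tpow k H n := mapPow (R := k) E n
  set A := (TensorProduct.assoc k H H (Tpow k H n)).toLinearMap
  set IC := iterComul (R := k) (Coalgebra.comul (R := k) (A := H)) (Coalgebra.counit (R := k) (A := H)) (n + 1)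
  set RΔ := LinearMap.rTensor (Tpow k H n) (Coalgebra.comul (R := k) (A := H))
  have hnat : TensorProduct.map E (TensorProduct.map E P) ∘ₗ A
      = A ∘ₗ TensorProduct.map (TensorProduct.map E E) P :=
    (assoc_naturality E E P).symm
  have hcomp1 : TensorProduct.map (TensorProduct.map E E) P ∘ₗ RΔ
      = TensorProduct.map (DH k H) P := by
    have := TensorProduct.map_comp (TensorProduct.map E E) P (Coalgebra.comul (R := k) (A := H))
      (LinearMap.id)
    rw [LinearMap.comp_id] at this
    exact this.symm
  have hcomp2 : LinearMap.rTensor (Tpow k H n) (DH k H) ∘ₗ TensorProduct.map E P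
      = TensorProduct.map (DH k H) P := by
    have := TensorProduct.map_comp (DH k H) (LinearMap.id) E P
    rw [LinearMap.id_comp, DH_comp_eH] at this
    exact this.symm
  calc @id (H →ₗ[k] H ⊗[k] (H ⊗[k] Tpow k H n))
        (deltaPow (R := k) Coalgebra.comul Coalgebra.counit (1 : H) (n + 2))
      = TensorProduct.map E (TensorProduct.map E P) ∘ₗ (A ∘ₗ RΔ ∘ₗ IC) := rfl
    _ = ((TensorProduct.map E (TensorProduct.map E P) ∘ₗ A) ∘ₗ RΔ) ∘ₗ IC :=
        LinearMap.ext fun _ => rfl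
    _ = ((A ∘ₗ TensorProduct.map (TensorProduct.map E E) P) ∘ₗ RΔ) ∘ₗ IC := by rw [hnat]
    _ = A ∘ₗ (TensorProduct.map (TensorProduct.map E E) P ∘ₗ RΔ) ∘ₗ IC :=
        LinearMap.ext fun _ => rfl
    _ = A ∘ₗ TensorProduct.map (DH k H) P ∘ₗ IC := by rw [hcomp1]
    _ = A ∘ₗ (LinearMap.rTensor (Tpow k H n) (DH k H) ∘ₗ TensorProduct.map E P) ∘ₗ IC := by
        rw [hcomp2]
    _ = A ∘ₗ LinearMap.rTensor (Tpow k H n) (DH k H)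
          ∘ₗ deltaPow (R := k) Coalgebra.comul Coalgebra.counit (1 : H) (n + 1) :=
        LinearMap.ext fun _ => rfl

end Aux

section Rest
variable {k : Type u} [Field k] {H : Type u} [Ring H] [Bialgebra k H]


lemma exists_comp_of_ker_le {V W U : Type u} [AddCommGroup V] [AddCommGroup W] [AddCommGroup U]
    [Module k V] [Module k W] [Module k U] (f : V →ₗ[k] W) (g : V →ₗ[k] U)
    (h : LinearMap.ker f ≤ LinearMap.ker g) : ∃ s : W →ₗ[k] U, g = s ∘ₗ f := by
  set K := LinearMap.ker f
  let f' : (V ⧸ K) →ₗ[k] W := K.liftQ f le_rfl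
  have hinj : LinearMap.ker f' = ⊥ := Submodule.ker_liftQ_eq_bot _ _ _ le_rfl
  obtain ⟨l, hl⟩ := f'.exists_leftInverse_of_injective hinj
  refine ⟨K.liftQ g h ∘ₗ l, ?_⟩
  ext v
  have h1 : f v = f' (K.mkQ v) := rfl
  have h2 : l (f' (K.mkQ v)) = K.mkQ v := LinearMap.congr_fun hl (K.mkQ v)
  simp only [LinearMap.comp_apply, h1, h2]
  simp

lemma prim_eq_zero [CharZero k] [Module.Finite k H] (z : H)
    (hΔ : Coalgebra.comul (R := k) z = (1 : H) ⊗ₜ[k] z + z ⊗ₜ[k] (1 : H))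
    (hε : Coalgebra.counit (R := k) z = (0 : k)) : z = 0 := by
  have hnt : Nontrivial H := by
    refine nontrivial_of_ne 1 0 fun h => ?_
    have := Bialgebra.counit_one (R := k) (A := H)
    rw [h, map_zero] at this
    exact zero_ne_one this
  have hint : IsIntegral k z := IsIntegral.of_finite k z
  set p := minpoly k z with hp
  obtain ⟨e, hd⟩ : ∃ e, p.natDegree = e + 1 :=
    ⟨p.natDegree - 1, (Nat.succ_pred_eq_of_pos (minpoly.natDegree_pos hint)).symm⟩
  have li := linearIndependent_pow (K := k) (S := H) z
  let B := Module.Basis.span li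
  obtain ⟨φ, hφ⟩ := LinearMap.exists_extend (B.coord ⟨e, by rw [← hp, hd]; omega⟩)
  have hφz : ∀ j, j < p.natDegree → φ (z ^ j) = if j = e then 1 else 0 := by
    intro j hj
    have h1 : z ^ j =
        (Submodule.span k (Set.range fun i : Fin p.natDegree => z ^ (i : ℕ))).subtype
          (B ⟨j, hj⟩) := by
      simp [B, Module.Basis.span_apply]
    rw [h1, ← LinearMap.comp_apply, hφ, Module.Basis.coord_apply, Module.Basis.repr_self_apply]
    simp [Fin.ext_iff, eq_comm]
  set c := φ (z ^ p.natDegree) with hc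
  have h0 : (Polynomial.aeval ((1 : H) ⊗ₜ[k] z + z ⊗ₜ[k] (1 : H)) p) = 0 := by
    rw [← hΔ, show Coalgebra.comul (R := k) z = Bialgebra.comulAlgHom k H z from rfl,
      Polynomial.aeval_algHom_apply, minpoly.aeval, map_zero]
  have hcomm : Commute ((1 : H) ⊗ₜ[k] z) (z ⊗ₜ[k] (1 : H)) := by
    simp [Commute, SemiconjBy, Algebra.TensorProduct.tmul_mul_tmul]
  rw [Polynomial.aeval_eq_sum_range (R := k)] at h0
  set T : H ⊗[k] H →ₗ[k] H :=
    (TensorProduct.rid k H).toLinearMap ∘ₗ (LinearMap.lTensor H φ) with hT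
  have hTt : ∀ (a b : H), T (a ⊗ₜ[k] b) = φ b • a := by
    intro a b; simp [hT]
  have h1 : T (∑ i ∈ range (p.natDegree + 1),
      p.coeff i • ((1 : H) ⊗ₜ[k] z + z ⊗ₜ[k] (1 : H)) ^ i) = 0 := by rw [h0]; simp
  rw [map_sum] at h1
  have h2 : ∀ i, T (p.coeff i • ((1 : H) ⊗ₜ[k] z + z ⊗ₜ[k] (1 : H)) ^ i)
      = ∑ m ∈ range (i + 1), (p.coeff i * (i.choose m : k) * φ (z ^ m)) • z ^ (i - m) := by
    intro i
    have key : ∀ m, ((1:H) ⊗ₜ[k] z) ^ m * (z ⊗ₜ[k] (1:H)) ^ (i - m) * (i.choose m : H ⊗[k] H)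
        = (i.choose m : k) • ((z ^ (i-m)) ⊗ₜ[k] (z ^ m)) := by
      intro m
      rw [Algebra.TensorProduct.tmul_pow, Algebra.TensorProduct.tmul_pow, one_pow, one_pow,
        Algebra.TensorProduct.tmul_mul_tmul, one_mul, mul_one,
        Nat.cast_smul_eq_nsmul, nsmul_eq_mul, (Nat.cast_commute _ _).eq]
    rw [hcomm.add_pow, Finset.smul_sum, map_sum]
    refine Finset.sum_congr rfl fun m hm => ?_
    rw [map_smul, key m, map_smul, hTt, smul_smul, smul_smul, mul_assoc]
  have h3 : (0 : H) = ∑ i ∈ range (p.natDegree + 1),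
      ∑ m ∈ range (i + 1), (p.coeff i * (i.choose m : k) * φ (z ^ m)) • z ^ (i - m) := by
    rw [← h1]
    exact Finset.sum_congr rfl fun i _ => h2 i
  rw [hd] at h3
  -- evaluate the double sum
  have houter : ∑ i ∈ range (e + 1), ∑ m ∈ range (i + 1),
      (p.coeff i * (i.choose m : k) * φ (z ^ m)) • z ^ (i - m) = (p.coeff e) • (1 : H) := by
    rw [Finset.sum_eq_single_of_mem e (self_mem_range_succ e)]
    · rw [Finset.sum_eq_single_of_mem e (self_mem_range_succ e)]
      · rw [hφz e (by omega), Nat.choose_self]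
        simp
      · intro m hm hme
        rw [hφz m (by simp at hm; omega)]
        simp [hme]
    · intro i hi hie
      refine Finset.sum_eq_zero fun m hm => ?_
      simp only [Finset.mem_range] at hi hm
      rw [hφz m (by omega)]
      have : m ≠ e := by omega
      simp [this]
  have hinner : ∑ m ∈ range (e + 1 + 1),
      (p.coeff (e+1) * ((e+1).choose m : k) * φ (z ^ m)) • z ^ (e + 1 - m)
      = ((e+1 : ℕ) : k) • z + c • (1 : H) := by
    rw [Finset.sum_range_succ, Finset.sum_range_succ]
    have hz0 : ∑ m ∈ range e, (p.coeff (e+1) * ((e+1).choose m : k) * φ (z ^ m)) • z ^ (e + 1 - m)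
        = 0 := by
      refine Finset.sum_eq_zero fun m hm => ?_
      simp only [Finset.mem_range] at hm
      rw [hφz m (by omega)]
      have : m ≠ e := by omega
      simp [this]
    have hlead : p.coeff (e + 1) = 1 := by
      have := (minpoly.monic hint).coeff_natDegree
      rwa [← hp, hd] at this
    have hce : φ (z ^ (e+1)) = c := by rw [hc, hd]
    rw [hz0, zero_add, hφz e (by omega), if_pos rfl, hlead, hce,
      Nat.choose_self, Nat.choose_succ_self_right]
    simp
  rw [Finset.sum_range_succ, houter, hinner] at h3
  -- now  0 = coeff e • 1 + ((e+1) • z + c • 1)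
  have hzz : ((e+1 : ℕ) : k) • z = -(p.coeff e + c) • (1 : H) := by
    calc ((e+1 : ℕ) : k) • z
        = (p.coeff e • (1:H) + (((e+1 : ℕ) : k) • z + c • 1)) - p.coeff e • 1 - c • 1 := by abel
      _ = -(p.coeff e + c) • (1 : H) := by rw [← h3, neg_smul, add_smul]; abel
  have hne : ((e+1 : ℕ) : k) ≠ 0 := Nat.cast_ne_zero.mpr (Nat.succ_ne_zero e)
  have hz1 : z = (((e+1 : ℕ) : k)⁻¹ * -(p.coeff e + c)) • (1 : H) := by
    rw [mul_smul, ← hzz, inv_smul_smul₀ hne]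
  have : ((e+1 : ℕ) : k)⁻¹ * -(p.coeff e + c) = 0 := by
    have := hε
    rw [hz1, map_smul, Bialgebra.counit_one, smul_eq_mul, mul_one] at this
    exact this
  rw [hz1, this, zero_smul]

lemma map_f_qH (f : H →ₗ[k] H) (x : H) :
    TensorProduct.map f (qH k H) (Coalgebra.comul (R := k) x) = f x ⊗ₜ[k] (1 : H) := by
  have h1 : TensorProduct.map f (qH k H)
      = TensorProduct.map f (LinearMap.toSpanSingleton k H 1)
        ∘ₗ LinearMap.lTensor H (Coalgebra.counit (R := k) (A := H)) := by
    have := TensorProduct.map_comp f (LinearMap.toSpanSingleton k H 1) LinearMap.id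
      (Coalgebra.counit (R := k) (A := H))
    rw [LinearMap.comp_id] at this
    exact this
  rw [h1, LinearMap.comp_apply, Coalgebra.lTensor_counit_comul, map_tmul]
  simp

lemma map_qH_g (g : H →ₗ[k] H) (x : H) :
    TensorProduct.map (qH k H) g (Coalgebra.comul (R := k) x) = (1 : H) ⊗ₜ[k] g x := by
  have h1 : TensorProduct.map (qH k H) g
      = TensorProduct.map (LinearMap.toSpanSingleton k H 1) g
        ∘ₗ LinearMap.rTensor H (Coalgebra.counit (R := k) (A := H)) := by
    have := TensorProduct.map_comp (LinearMap.toSpanSingleton k H 1) g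
      (Coalgebra.counit (R := k) (A := H)) LinearMap.id
    rw [LinearMap.comp_id] at this
    exact this
  rw [h1, LinearMap.comp_apply, Coalgebra.rTensor_counit_comul, map_tmul]
  simp

lemma comul_decomp (x : H) :
    Coalgebra.comul (R := k) x
      = TensorProduct.map (eH k H) (eH k H) (Coalgebra.comul (R := k) x)
        + eH k H x ⊗ₜ[k] (1 : H) + (1 : H) ⊗ₜ[k] eH k H x
        + Coalgebra.counit (R := k) x • ((1 : H) ⊗ₜ[k] (1 : H)) := by
  have h0 : Coalgebra.comul (R := k) x
      = TensorProduct.map (eH k H + qH k H) (eH k H + qH k H)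
          (Coalgebra.comul (R := k) x) := by
    rw [eH_add_qH, TensorProduct.map_id]; rfl
  rw [TensorProduct.map_add_left, TensorProduct.map_add_right, TensorProduct.map_add_right,
    LinearMap.add_apply, LinearMap.add_apply, LinearMap.add_apply] at h0
  rw [map_f_qH, map_qH_g, map_qH_g] at h0
  -- map q q term : 1 ⊗ q x = counit x • (1 ⊗ 1)
  have hq : (1 : H) ⊗ₜ[k] qH k H x = Coalgebra.counit (R := k) x • ((1 : H) ⊗ₜ[k] (1 : H)) := by
    simp [qH, TensorProduct.tmul_smul]
  rw [hq] at h0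
  conv_lhs => rw [h0]
  abel

lemma ker_DH_le [CharZero k] [Module.Finite k H] :
    LinearMap.ker (DH k H) ≤ LinearMap.ker (eH k H) := by
  intro x hx
  rw [LinearMap.mem_ker] at hx ⊢
  rw [DH, LinearMap.comp_apply] at hx
  set z := eH k H x with hz
  have hεz : Coalgebra.counit (R := k) z = 0 := counit_eH (k := k) x
  have hd := comul_decomp (k := k) x
  rw [hx, zero_add] at hd
  have hΔz : Coalgebra.comul (R := k) z = (1 : H) ⊗ₜ[k] z + z ⊗ₜ[k] (1 : H) := by
    have h2 : Coalgebra.comul (R := k) z = Coalgebra.comul (R := k) x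
        - Coalgebra.counit (R := k) x • ((1 : H) ⊗ₜ[k] (1 : H)) := by
      rw [hz, eH_apply, map_sub, map_smul, Bialgebra.comul_one,
        Algebra.TensorProduct.one_def]
    rw [h2, hd]; abel
  exact prim_eq_zero z hΔz hεz

lemma delta_step [CharZero k] [Module.Finite k H] (n : ℕ) (x : H)
    (hx : deltaPow (R := k) Coalgebra.comul Coalgebra.counit (1 : H) (n + 2) x = 0) :
    deltaPow (R := k) Coalgebra.comul Coalgebra.counit (1 : H) (n + 1) x = 0 := by
  set y : H ⊗[k] (Tpow k H n) :=
    deltaPow (R := k) Coalgebra.comul Coalgebra.counit (1 : H) (n + 1) x with hy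
  rw [deltaPow_succ_succ n] at hx
  have h1 : (TensorProduct.assoc k H H (Tpow k H n)).toLinearMap
      (LinearMap.rTensor (Tpow k H n) (DH k H) y) = 0 := hx
  have h2 : LinearMap.rTensor (Tpow k H n) (DH k H) y = 0 :=
    (LinearEquiv.map_eq_zero_iff _).mp h1
  obtain ⟨s, hs⟩ := exists_comp_of_ker_le (DH k H) (eH k H) ker_DH_le
  have h3 : LinearMap.rTensor (Tpow k H n) (eH k H) y = 0 := by
    rw [hs, LinearMap.rTensor_comp, LinearMap.comp_apply, h2, map_zero]
  have h5 : LinearMap.rTensor (Tpow k H n) (Coalgebra.counit (R := k) (A := H)) y = 0 := by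
    have hy2 : y = TensorProduct.map (eH k H) (mapPow (eH k H) n)
        (iterComul (R := k) (Coalgebra.comul (R := k) (A := H))
          (Coalgebra.counit (R := k) (A := H)) (n + 1) x) := rfl
    have hc : LinearMap.rTensor (Tpow k H n) (Coalgebra.counit (R := k) (A := H))
        ∘ₗ TensorProduct.map (eH k H) (mapPow (eH k H) n)
        = TensorProduct.map ((Coalgebra.counit (R := k) (A := H)) ∘ₗ eH k H)
            (LinearMap.id ∘ₗ mapPow (eH k H) n) :=
      (TensorProduct.map_comp _ _ _ _).symm
    have hz : (Coalgebra.counit (R := k) (A := H)) ∘ₗ eH k H = 0 := by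
      ext v; exact counit_eH v
    rw [hy2]
    have key : ∀ v : H ⊗[k] Tpow k H n, LinearMap.rTensor (Tpow k H n)
        (Coalgebra.counit (R := k) (A := H)) (TensorProduct.map (eH k H) (mapPow (eH k H) n) v)
        = 0 := by
      intro v
      have := LinearMap.congr_fun hc v
      rw [hz, TensorProduct.map_zero_left, LinearMap.zero_apply] at this
      exact this
    exact key _
  have h6 : y = 0 := by
    have hid : LinearMap.rTensor (Tpow k H n) (LinearMap.id (M := H) (R := k)) y = y := by
      rw [LinearMap.rTensor_id]; rfl
    rw [← eH_add_qH, LinearMap.rTensor_add, LinearMap.add_apply, h3, zero_add] at hid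
    rw [← hid, qH, LinearMap.rTensor_comp, LinearMap.comp_apply, h5, map_zero]
  exact h6

lemma corad_subset_step [CharZero k] [Module.Finite k H] (n : ℕ) :
    corad (R := k) (Coalgebra.comul (R := k) (A := H)) (Coalgebra.counit (R := k) (A := H))
        (1 : H) (n + 1)
      ≤ corad (R := k) (Coalgebra.comul (R := k) (A := H)) (Coalgebra.counit (R := k) (A := H))
        (1 : H) n :=
  fun x hx => LinearMap.mem_ker.mpr (delta_step n x (LinearMap.mem_ker.mp hx))

lemma deltaPow_one_eq_zero : ∀ n : ℕ,
    deltaPow (R := k) Coalgebra.comul Coalgebra.counit (1 : H) (n + 1) (1 : H) = 0 := by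
  intro n
  induction n with
  | zero =>
      have h1 : deltaPow (R := k) Coalgebra.comul Coalgebra.counit (1 : H) 1 (1 : H)
          = TensorProduct.map (eH k H) LinearMap.id
              ((TensorProduct.rid k H).symm (1 : H)) := rfl
      rw [h1, TensorProduct.rid_symm_apply, map_tmul, eH_one, zero_tmul]
      rfl
  | succ m ih =>
      rw [deltaPow_succ_succ m]
      show (TensorProduct.assoc k H H (Tpow k H m)).toLinearMap
        (LinearMap.rTensor (Tpow k H m) (DH k H)
          (deltaPow (R := k) Coalgebra.comul Coalgebra.counit (1 : H) (m + 1) (1 : H))) = 0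
      rw [ih]
      exact (congrArg (TensorProduct.assoc k H H (Tpow k H m)).toLinearMap
        (map_zero (LinearMap.rTensor (Tpow k H m) (DH k H)))).trans (map_zero _)

lemma corad_zero_eq : corad (R := k) Coalgebra.comul Coalgebra.counit (1 : H) 0
    = Submodule.span k {(1 : H)} := by
  ext x
  rw [corad, LinearMap.mem_ker]
  constructor
  · intro hx
    have h1 : deltaPow (R := k) Coalgebra.comul Coalgebra.counit (1 : H) 1 x
        = TensorProduct.map (eH k H) LinearMap.id ((TensorProduct.rid k H).symm x) := rfl
    rw [h1, TensorProduct.rid_symm_apply, map_tmul] at hx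
    have h2 : eH k H x = 0 := by
      have := congrArg (TensorProduct.rid k H) hx
      simp at this
      exact this.trans (map_zero (TensorProduct.rid k H))
    rw [eH_apply, sub_eq_zero] at h2
    rw [Submodule.mem_span_singleton]
    exact ⟨Coalgebra.counit (R := k) x, h2.symm⟩
  · intro hx
    rw [Submodule.mem_span_singleton] at hx
    obtain ⟨c, rfl⟩ := hx
    rw [map_smul, deltaPow_one_eq_zero 0, smul_zero]

end Rest
end AuxStuff

/-- Over a field of characteristic zero, a finite-dimensional bialgebra `H` has
`P_n(H) = k·1_H` for all `n`; in particular `H` is conilpotent iff `H = k·1_H`. -/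
theorem stmt11 {k : Type u} [Field k] [CharZero k] {H : Type u} [Ring H] [Bialgebra k H]
    [Module.Finite k H] :
    (∀ n : ℕ, corad (Coalgebra.comul (R := k) (A := H))
        (Coalgebra.counit (R := k) (A := H)) (1 : H) n = Submodule.span k {(1 : H)}) ∧
    ((∀ x : H, ∃ n : ℕ, x ∈ corad (Coalgebra.comul (R := k) (A := H))
        (Coalgebra.counit (R := k) (A := H)) (1 : H) n)
      ↔ Submodule.span k {(1 : H)} = ⊤) := by
  have hall : ∀ n : ℕ, corad (Coalgebra.comul (R := k) (A := H))
      (Coalgebra.counit (R := k) (A := H)) (1 : H) n = Submodule.span k {(1 : H)} := by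
    intro n
    induction n with
    | zero => exact corad_zero_eq
    | succ m ih =>
        apply le_antisymm
        · exact (corad_subset_step m).trans (le_of_eq ih)
        · rw [Submodule.span_le, Set.singleton_subset_iff]
          exact LinearMap.mem_ker.mpr (deltaPow_one_eq_zero (m + 1))
  refine ⟨hall, ?_, ?_⟩
  · intro h
    rw [eq_top_iff]
    intro x _
    obtain ⟨n, hn⟩ := h x
    rwa [hall n] at hn
  · intro h x
    refine ⟨0, ?_⟩
    rw [hall 0, h]
    trivial
end
end

section
/- Let k be a commutative ring and H a bialgebra over k. For every n ∈ ℕ, the coradical filtration contains the primitive filtration: P_1(H)^n ⊆ P_n(H), where P_1(H)^n denotes the n-th power of the submodule P_1(H) under the multiplication of H (the submodule spanned by products of n elements of P_1(H), with P_1(H)^0 = k·1_H). -/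
open TensorProduct

noncomputable section

universe u

variable (R : Type u) [CommRing R]

variable {R}
variable {H : Type u} [AddCommGroup H] [Module R H]

/-! ### Auxiliary lemmas -/

section AuxLemmas

lemma myAssocNat {A B C D : Type u} [AddCommGroup A] [AddCommGroup B] [AddCommGroup C]
    [AddCommGroup D] [Module R A] [Module R B] [Module R C] [Module R D] (f : C →ₗ[R] D) :
    (TensorProduct.assoc R A B D).toLinearMap ∘ₗ LinearMap.lTensor (A ⊗[R] B) f
      = LinearMap.lTensor A (LinearMap.lTensor B f) ∘ₗ (TensorProduct.assoc R A B C).toLinearMap := by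
  ext a b c
  rfl

variable {H : Type u} [Ring H] [Bialgebra R H]

local notation "Δc" => (Coalgebra.comul (R := R) (A := H))
local notation "εc" => (Coalgebra.counit (R := R) (A := H))
local notation "eH" => (eAug εc (1 : H))
local notation "dP" => (deltaPow Δc εc (1 : H))

lemma iterComul_succ (n : ℕ) :
    iterComul Δc εc (n + 1) = LinearMap.lTensor H (iterComul Δc εc n) ∘ₗ Δc := by
  induction n with
  | zero =>
      show iterComul Δc εc 1 = LinearMap.lTensor H εc ∘ₗ Δc
      rw [Coalgebra.lTensor_counit_comp_comul]
      apply LinearMap.ext; intro x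
      show (TensorProduct.rid R H).symm x = _
      rw [TensorProduct.rid_symm_apply]
      rfl
  | succ n ih =>
      have e1 : LinearMap.rTensor (Tpow R H n) Δc ∘ₗ iterComul Δc εc (n+1)
          = (LinearMap.lTensor (H ⊗[R] H) (iterComul Δc εc n))
              ∘ₗ (LinearMap.rTensor H Δc ∘ₗ Δc) := by
        rw [ih, ← LinearMap.comp_assoc, LinearMap.rTensor_comp_lTensor,
          ← LinearMap.lTensor_comp_rTensor, LinearMap.comp_assoc]
      show (TensorProduct.assoc R H H (Tpow R H n)).toLinearMap
          ∘ₗ (LinearMap.rTensor (Tpow R H n) Δc) ∘ₗ (iterComul Δc εc (n + 1)) = _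
      rw [e1, ← LinearMap.comp_assoc, myAssocNat, LinearMap.comp_assoc, Coalgebra.coassoc,
        ← LinearMap.comp_assoc, ← LinearMap.lTensor_comp, ← ih]
      rfl

lemma deltaPow_succ (n : ℕ) :
    dP (n + 1) = TensorProduct.map eH (dP n) ∘ₗ Δc := by
  show (mapPow eH (n+1)) ∘ₗ (iterComul Δc εc (n+1)) = _
  rw [iterComul_succ]
  show TensorProduct.map eH (mapPow eH n) ∘ₗ (LinearMap.lTensor H (iterComul Δc εc n) ∘ₗ Δc) = _
  rw [← LinearMap.comp_assoc, LinearMap.map_comp_lTensor]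
  rfl

lemma eAug_one : eH (1 : H) = 0 := by
  simp [eAug]

lemma deltaPow_one (n : ℕ) : dP (n + 1) (1 : H) = 0 := by
  rw [deltaPow_succ]
  show TensorProduct.map eH (dP n) (Δc (1 : H)) = (0 : H ⊗[R] Tpow R H n)
  rw [Bialgebra.comul_one, Algebra.TensorProduct.one_def]
  simp [eAug_one]


def Mmul (p : H) : (N : ℕ) → (Tpow R H N →ₗ[R] Tpow R H N)
  | 0 => 0
  | N + 1 => LinearMap.rTensor (Tpow R H N) (LinearMap.mulLeft R p)
      + LinearMap.lTensor H (Mmul p N)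

def Jins (p : H) : (N : ℕ) → (Tpow R H N →ₗ[R] Tpow R H (N + 1))
  | 0 => TensorProduct.mk R H R p
  | N + 1 =>
      (show Tpow R H (N + 1) →ₗ[R] Tpow R H (N + 2) from
        TensorProduct.mk R H (Tpow R H (N + 1)) p)
      + (show Tpow R H (N + 1) →ₗ[R] Tpow R H (N + 2) from
        LinearMap.lTensor H (Jins p N))

lemma Mmul_succ_apply (p : H) (N : ℕ) (t : H ⊗[R] Tpow R H N) :
    Mmul p (N + 1) t
      = LinearMap.rTensor (Tpow R H N) (LinearMap.mulLeft R p) t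
        + LinearMap.lTensor H (Mmul p N) t := rfl

lemma Jins_succ_apply (p : H) (N : ℕ) (t : H ⊗[R] Tpow R H N) :
    Jins p (N + 1) t
      = (TensorProduct.mk R H (Tpow R H (N + 1)) p) t
        + LinearMap.lTensor H (Jins p N) t := rfl

lemma tmul_one_mul (p : H) (t : H ⊗[R] H) :
    (p ⊗ₜ[R] (1 : H)) * t = LinearMap.rTensor H (LinearMap.mulLeft R p) t := by
  induction t with
  | zero => simp
  | tmul a b => simp [Algebra.TensorProduct.tmul_mul_tmul]
  | add x y hx hy => simp [mul_add, hx, hy]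

lemma one_tmul_mul (p : H) (t : H ⊗[R] H) :
    ((1 : H) ⊗ₜ[R] p) * t = LinearMap.lTensor H (LinearMap.mulLeft R p) t := by
  induction t with
  | zero => simp
  | tmul a b => simp [Algebra.TensorProduct.tmul_mul_tmul]
  | add x y hx hy => simp [mul_add, hx, hy]

lemma eAug_mulLeft (p : H) (hε : εc p = 0) :
    eH ∘ₗ LinearMap.mulLeft R p
      = LinearMap.mulLeft R p ∘ₗ eH + LinearMap.toSpanSingleton R H p ∘ₗ εc := by
  ext x
  simp only [LinearMap.comp_apply, LinearMap.add_apply, LinearMap.mulLeft_apply, eAug,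
    LinearMap.sub_apply, LinearMap.id_apply, LinearMap.toSpanSingleton_apply,
    Bialgebra.counit_mul, hε, zero_mul, zero_smul, sub_zero, mul_sub, mul_smul_comm, mul_one]
  abel

lemma deltaPow_one_apply (x : H) : dP 1 x = (eH x) ⊗ₜ[R] (1 : R) := by
  show TensorProduct.map eH (LinearMap.id (R := R) (M := R))
      ((TensorProduct.rid R H).symm x) = _
  rw [TensorProduct.rid_symm_apply]
  rfl

lemma deltaPow_zero_apply (x : H) : dP 0 x = εc x := rfl

lemma key (p : H) (hε : εc p = 0)
    (hΔ : Δc p = p ⊗ₜ[R] (1 : H) + (1 : H) ⊗ₜ[R] p) (N : ℕ) :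
    dP (N + 1) ∘ₗ LinearMap.mulLeft R p
      = Mmul p (N + 1) ∘ₗ dP (N + 1) + Jins p N ∘ₗ dP N := by
  induction N with
  | zero =>
      apply LinearMap.ext; intro y
      show dP 1 (p * y) = (Mmul p 1) (dP 1 y) + (Jins p 0) (dP 0 y)
      rw [deltaPow_one_apply, deltaPow_one_apply, deltaPow_zero_apply]
      erw [Mmul_succ_apply]
      have hmk : Jins p 0 (εc y) = (εc y • p) ⊗ₜ[R] (1 : R) := by
        show p ⊗ₜ[R] (εc y) = _
        conv_lhs => rw [show (εc y) = εc y • (1 : R) by rw [smul_eq_mul, mul_one]]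
        rw [TensorProduct.tmul_smul, TensorProduct.smul_tmul']
      rw [hmk]
      erw [show Mmul p 0 = (0 : Tpow R H 0 →ₗ[R] Tpow R H 0) from rfl, LinearMap.lTensor_zero,
        LinearMap.zero_apply, add_zero, LinearMap.rTensor_tmul]
      simp only [eAug, LinearMap.sub_apply, LinearMap.id_apply, LinearMap.comp_apply,
        LinearMap.toSpanSingleton_apply, LinearMap.mulLeft_apply, Bialgebra.counit_mul, hε,
        zero_mul, zero_smul, sub_zero, mul_sub, mul_smul_comm, mul_one]
      erw [TensorProduct.sub_tmul]
      exact (sub_add_cancel _ _).symm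
  | succ N ih =>
      apply LinearMap.ext; intro y
      have hstep' : ∀ z : H, TensorProduct.map eH (dP (N + 1)) (Δc z) = dP (N + 2) z := by
        intro z
        rw [deltaPow_succ (N + 1)]
        rfl
      have hstep'' : ∀ z : H, TensorProduct.map eH (dP N) (Δc z) = dP (N + 1) z := by
        intro z
        rw [deltaPow_succ N]
        rfl
      have hΔmul : Δc (p * y)
          = LinearMap.rTensor H (LinearMap.mulLeft R p) (Δc y)
            + LinearMap.lTensor H (LinearMap.mulLeft R p) (Δc y) := by
        rw [Bialgebra.comul_mul, hΔ, add_mul, tmul_one_mul, one_tmul_mul]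
      have termA : TensorProduct.map eH (dP (N + 1))
            (LinearMap.rTensor H (LinearMap.mulLeft R p) (Δc y))
          = LinearMap.rTensor (Tpow R H (N + 1)) (LinearMap.mulLeft R p) (dP (N + 2) y)
            + TensorProduct.mk R H (Tpow R H (N + 1)) p (dP (N + 1) y) := by
        rw [← LinearMap.comp_apply, LinearMap.map_comp_rTensor, eAug_mulLeft p hε,
          TensorProduct.map_add_left, LinearMap.add_apply, ← LinearMap.rTensor_comp_map,
          ← LinearMap.map_comp_rTensor, LinearMap.comp_apply, LinearMap.comp_apply,
          hstep' y, Coalgebra.rTensor_counit_comul, TensorProduct.map_tmul,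
          LinearMap.toSpanSingleton_apply, one_smul]
        rfl
      have termB : TensorProduct.map eH (dP (N + 1))
            (LinearMap.lTensor H (LinearMap.mulLeft R p) (Δc y))
          = LinearMap.lTensor H (Mmul p (N + 1)) (dP (N + 2) y)
            + LinearMap.lTensor H (Jins p N) (dP (N + 1) y) := by
        rw [← LinearMap.comp_apply, LinearMap.map_comp_lTensor, ih,
          TensorProduct.map_add_right, LinearMap.add_apply, ← LinearMap.lTensor_comp_map,
          ← LinearMap.lTensor_comp_map, LinearMap.comp_apply, LinearMap.comp_apply,
          hstep' y, hstep'' y]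
      show dP (N + 2) (p * y)
          = Mmul p (N + 2) (dP (N + 2) y) + Jins p (N + 1) (dP (N + 1) y)
      rw [← hstep' (p * y), hΔmul, map_add, termA, termB]
      erw [Mmul_succ_apply, Jins_succ_apply]
      abel


lemma deltaPow_one_eq : dP 1 = (TensorProduct.rid R H).symm.toLinearMap ∘ₗ eH := by
  apply LinearMap.ext; intro x
  rw [deltaPow_one_apply]
  exact (TensorProduct.rid_symm_apply _).symm

lemma eAug_tensor (x : H) :
    TensorProduct.map eH eH (Δc x)
      = Δc x - x ⊗ₜ[R] (1 : H) - (1 : H) ⊗ₜ[R] (eH x) := by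
  have h1 : LinearMap.rTensor H eH (Δc x) = Δc x - (1 : H) ⊗ₜ[R] x := by
    rw [show eH = LinearMap.id - LinearMap.toSpanSingleton R H 1 ∘ₗ εc from rfl,
      LinearMap.rTensor_sub, LinearMap.sub_apply, LinearMap.rTensor_id, LinearMap.id_apply,
      LinearMap.rTensor_comp, LinearMap.comp_apply, Coalgebra.rTensor_counit_comul,
      LinearMap.rTensor_tmul, LinearMap.toSpanSingleton_apply, one_smul]
  have h2 : TensorProduct.map eH eH (Δc x)
      = LinearMap.lTensor H eH (LinearMap.rTensor H eH (Δc x)) :=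
    (LinearMap.congr_fun (LinearMap.lTensor_comp_rTensor (f := eH) (g := eH)) (Δc x)).symm
  have h3 : LinearMap.lTensor H eH (Δc x) = Δc x - x ⊗ₜ[R] (1 : H) := by
    rw [show eH = LinearMap.id - LinearMap.toSpanSingleton R H 1 ∘ₗ εc from rfl,
      LinearMap.lTensor_sub, LinearMap.sub_apply, LinearMap.lTensor_id, LinearMap.id_apply,
      LinearMap.lTensor_comp, LinearMap.comp_apply, Coalgebra.lTensor_counit_comul,
      LinearMap.lTensor_tmul, LinearMap.toSpanSingleton_apply, one_smul]
  rw [h2, h1, map_sub, h3, LinearMap.lTensor_tmul]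

lemma prim_of_corad (p : H) (hp : dP 2 p = 0) :
    Δc (p - εc p • (1 : H))
        = (p - εc p • (1 : H)) ⊗ₜ[R] (1 : H) + (1 : H) ⊗ₜ[R] (p - εc p • (1 : H))
      ∧ εc (p - εc p • (1 : H)) = 0 := by
  have hε : εc (p - εc p • (1 : H)) = 0 := by
    rw [map_sub, map_smul, Bialgebra.counit_one, smul_eq_mul, mul_one, sub_self]
  refine ⟨?_, hε⟩
  have h0 : TensorProduct.map eH eH (Δc p) = 0 := by
    have hd : dP 2 p = TensorProduct.map LinearMap.id (TensorProduct.rid R H).symm.toLinearMap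
        (TensorProduct.map eH eH (Δc p)) := by
      have : TensorProduct.map eH (dP 1) (Δc p) = dP 2 p := by
        rw [deltaPow_succ 1]; rfl
      rw [← this, deltaPow_one_eq]
      exact LinearMap.congr_fun (TensorProduct.map_comp LinearMap.id
        (TensorProduct.rid R H).symm.toLinearMap eH eH) (Δc p)
    rw [hp] at hd
    have h4 := congrArg (TensorProduct.map (LinearMap.id (R := R) (M := H))
      (TensorProduct.rid R H).toLinearMap) hd.symm
    rw [← LinearMap.comp_apply, ← TensorProduct.map_comp, LinearMap.id_comp,
      show (TensorProduct.rid R H).toLinearMap ∘ₗ (TensorProduct.rid R H).symm.toLinearMap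
        = LinearMap.id from LinearMap.ext fun t => (TensorProduct.rid R H).apply_symm_apply t,
      TensorProduct.map_id, LinearMap.id_apply] at h4
    exact h4.trans (map_zero _)
  rw [eAug_tensor, sub_eq_zero, sub_eq_iff_eq_add] at h0
  -- h0 : Δc p = 1 ⊗ₜ eH p + p ⊗ₜ 1  (check order)
  rw [map_sub, map_smul, Bialgebra.comul_one, Algebra.TensorProduct.one_def, h0]
  rw [show eH p = p - εc p • (1 : H) from rfl]
  rw [TensorProduct.tmul_sub, TensorProduct.sub_tmul, TensorProduct.tmul_smul,
    TensorProduct.smul_tmul']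
  abel

lemma coradAux : ∀ (n : ℕ) (x : H), x ∈ (corad Δc εc (1 : H) 1) ^ n →
    ∀ N : ℕ, n ≤ N → dP (N + 1) x = 0 := by
  intro n
  induction n with
  | zero =>
      intro x hx N _
      rw [pow_zero] at hx
      obtain ⟨r, rfl⟩ := Submodule.mem_one.mp hx
      rw [Algebra.algebraMap_eq_smul_one, map_smul, deltaPow_one, smul_zero]
  | succ n ih =>
      intro x hx N hN
      rw [pow_succ'] at hx
      refine Submodule.mul_induction_on hx ?_ ?_
      · intro m hm y hy
        obtain ⟨M, rfl⟩ : ∃ M, N = M + 1 := ⟨N - 1, by omega⟩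
        have hm' : dP 2 m = 0 := by simpa [corad, LinearMap.mem_ker] using hm
        obtain ⟨hΔp, hεp⟩ := prim_of_corad m hm'
        have hxy : m * y = (m - εc m • (1 : H)) * y + εc m • y := by
          rw [sub_mul, smul_mul_assoc, one_mul, sub_add_cancel]
        have hy1 : dP (M + 2) y = 0 := ih y hy (M + 1) (by omega)
        have hy2 : dP (M + 1) y = 0 := ih y hy M (by omega)
        have hk := LinearMap.congr_fun (key (m - εc m • (1 : H)) hεp hΔp (M + 1)) y
        simp only [LinearMap.comp_apply, LinearMap.add_apply, LinearMap.mulLeft_apply,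
          hy1, hy2, map_zero, add_zero] at hk
        rw [hxy, map_add, map_smul, hk, hy1, smul_zero, add_zero]
      · intro a b ha hb
        rw [map_add, ha, hb, add_zero]

lemma coradMain (n : ℕ) :
    (corad Δc εc (1 : H) 1) ^ n ≤ corad Δc εc (1 : H) n := by
  intro x hx
  simpa [corad, LinearMap.mem_ker] using coradAux n x hx n le_rfl

end AuxLemmas

/-- For a bialgebra `H` over a commutative ring, the coradical filtration contains the
primitive filtration: `P_1(H)^n ⊆ P_n(H)`. -/
theorem stmt12 {R : Type u} [CommRing R] {H : Type u} [Ring H] [Bialgebra R H] (n : ℕ) :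
    (corad (Coalgebra.comul (R := R) (A := H))
        (Coalgebra.counit (R := R) (A := H)) (1 : H) 1) ^ n
      ≤ corad (Coalgebra.comul (R := R) (A := H))
        (Coalgebra.counit (R := R) (A := H)) (1 : H) n := by
  exact coradMain n
end
end

section
/- Let k be a commutative ring and n, m ∈ ℕ. Write F_r for the free group on generators x_1, …, x_r, and let k·gr^op(n,m) denote the free k-module on the set of group homomorphisms F_m → F_n. For 1 ≤ i ≤ n define homomorphisms α_i, β_i, γ_i : F_{n+1} → F_n on the generators y_1, …, y_{n+1} of F_{n+1} by: α_i(y_j) = x_j for j ≤ i, α_i(y_{i+1}) = x_i, α_i(y_j) = x_{j−1} for j ≥ i+2; β_i(y_j) = x_j for j ≤ i, β_i(y_{i+1}) = 1, β_i(y_j) = x_{j−1} for j ≥ i+2; γ_i(y_j) = x_j for j ≤ i−1, γ_i(y_i) = 1, γ_i(y_{i+1}) = x_i, γ_i(y_j) = x_{j−1} for j ≥ i+2. Let I(n,m) be the k-submodule of k·gr^op(n,m) spanned by the elements (α_i ∘ φ) − (β_i ∘ φ) − (γ_i ∘ φ) for all group homomorphisms φ : F_m → F_{n+1} and all 1 ≤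 i ≤ n. Then k·gr^op(n,m) = I(n,m) + span(E), where E is the set of homomorphisms ρ : F_m → F_n such that each ρ(y_i) is a positive word in the generators x_1, …, x_n (a product of generators with no inverses, possibly empty) and each generator x_j (1 ≤ j ≤ n) occurs exactly once in the concatenation ρ(y_1)ρ(y_2)⋯ρ(y_m). Equivalently, the composite Cat_{Ass^u}(n,m) → k·gr^op(n,m) → k·gr^op(n,m)/I(n,m) is surjective. -/
noncomputable section

universe u

open scoped Classical

namespace Stmt18

variable (k : Type u) [CommRing k]

/-- `x j`, the `j`-th generator of the free group `F_r`. -/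
abbrev gen {r : ℕ} (j : Fin r) : FreeGroup (Fin r) := FreeGroup.of j

variable (n : ℕ)

/-- `α_i : F_{n+1} → F_n`, sending `y_j ↦ x_j` for `j ≤ i`, `y_{i+1} ↦ x_i` and
`y_j ↦ x_{j−1}` for `j ≥ i + 2` (0-indexed version of the statement). -/
def alphaMap (i : Fin n) : FreeGroup (Fin (n + 1)) →* FreeGroup (Fin n) :=
  FreeGroup.lift fun j : Fin (n + 1) =>
    if h : (j : ℕ) ≤ (i : ℕ) then gen ⟨(j : ℕ), lt_of_le_of_lt h i.isLt⟩
    else if (j : ℕ) = (i : ℕ) + 1 then gen i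
    else gen ⟨(j : ℕ) - 1, by omega⟩

/-- `β_i : F_{n+1} → F_n`, as `α_i` but `y_{i+1} ↦ 1`. -/
def betaMap (i : Fin n) : FreeGroup (Fin (n + 1)) →* FreeGroup (Fin n) :=
  FreeGroup.lift fun j : Fin (n + 1) =>
    if h : (j : ℕ) ≤ (i : ℕ) then gen ⟨(j : ℕ), lt_of_le_of_lt h i.isLt⟩
    else if (j : ℕ) = (i : ℕ) + 1 then 1
    else gen ⟨(j : ℕ) - 1, by omega⟩

/-- `γ_i : F_{n+1} → F_n`, sending `y_j ↦ x_j` for `j < i`, `y_i ↦ 1`, `y_{i+1} ↦ x_i` and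
`y_j ↦ x_{j−1}` for `j ≥ i + 2` (0-indexed version of the statement). -/
def gammaMap (i : Fin n) : FreeGroup (Fin (n + 1)) →* FreeGroup (Fin n) :=
  FreeGroup.lift fun j : Fin (n + 1) =>
    if h : (j : ℕ) < (i : ℕ) then gen ⟨(j : ℕ), lt_trans h i.isLt⟩
    else if (j : ℕ) = (i : ℕ) then 1
    else if (j : ℕ) = (i : ℕ) + 1 then gen i
    else gen ⟨(j : ℕ) - 1, by omega⟩

variable (m : ℕ)

/-- The submodule `I(n,m)` of the free `k`-module on `gr^op(n,m) = Hom(F_m, F_n)`, spanned by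
the elements `(α_i ∘ φ) − (β_i ∘ φ) − (γ_i ∘ φ)`. -/
def idealI : Submodule k ((FreeGroup (Fin m) →* FreeGroup (Fin n)) →₀ k) :=
  Submodule.span k
    {v | ∃ (φ : FreeGroup (Fin m) →* FreeGroup (Fin (n + 1))) (i : Fin n),
      v = Finsupp.single ((alphaMap n i).comp φ) (1 : k)
        - Finsupp.single ((betaMap n i).comp φ) (1 : k)
        - Finsupp.single ((gammaMap n i).comp φ) (1 : k)}

/-- The set `E` of homomorphisms `ρ : F_m → F_n` such that each `ρ(y_i)` is a positive word
in the generators and each generator occurs exactly once in the concatenation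
`ρ(y_1)⋯ρ(y_m)`. -/
def setE : Set (FreeGroup (Fin m) →* FreeGroup (Fin n)) :=
  {ρ | ∃ w : Fin m → List (Fin n),
    (∀ i : Fin m, ρ (FreeGroup.of i) = ((w i).map FreeGroup.of).prod) ∧
    (List.ofFn w).flatten.Perm (List.finRange n)}

/-- letter interpretation -/
def ltr {n : ℕ} (l : Fin n × Bool) : FreeGroup (Fin n) :=
  cond l.2 (FreeGroup.of l.1) (FreeGroup.of l.1)⁻¹

/-- word product under a letterwise map -/
def wp {n : ℕ} {G : Type*} [Monoid G] (g : Fin n × Bool → G) (u : List (Fin n × Bool)) : G :=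
  (u.map g).prod

lemma wp_nil {n : ℕ} {G : Type*} [Monoid G] (g : Fin n × Bool → G) : wp g [] = 1 := rfl

lemma wp_append {n : ℕ} {G : Type*} [Monoid G] (g : Fin n × Bool → G) (u v : List (Fin n × Bool)) :
    wp g (u ++ v) = wp g u * wp g v := by simp [wp]

lemma wp_cons {n : ℕ} {G : Type*} [Monoid G] (g : Fin n × Bool → G) (x : Fin n × Bool)
    (u : List (Fin n × Bool)) : wp g (x :: u) = g x * wp g u := by simp [wp]

lemma hom_wp {n : ℕ} {G H : Type*} [Monoid G] [Monoid H] (ψ : G →* H)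
    (g : Fin n × Bool → G) (u : List (Fin n × Bool)) : ψ (wp g u) = wp (fun l => ψ (g l)) u := by
  rw [wp, wp, map_list_prod, List.map_map]; rfl

lemma wp_congr {n : ℕ} {G : Type*} [Monoid G] {g h : Fin n × Bool → G}
    {u : List (Fin n × Bool)} (H : ∀ l ∈ u, g l = h l) : wp g u = wp h u := by
  unfold wp; rw [List.map_congr_left H]

lemma wp_filter {n : ℕ} {G : Type*} [Monoid G] {g h : Fin n × Bool → G} (p : Fin n × Bool → Bool)
    {u : List (Fin n × Bool)}
    (H : ∀ l ∈ u, if p l then g l = h l else g l = 1) :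
    wp g u = wp h (u.filter p) := by
  induction u with
  | nil => rfl
  | cons x t ih =>
    have hx := H x (List.mem_cons_self)
    have ht := fun l hl => H l (List.mem_cons_of_mem x hl)
    by_cases hp : p x = true
    ·  rw [if_pos hp] at hx
       simp [List.filter_cons, hp, wp_cons, hx, ih ht]
    ·  rw [if_neg hp] at hx
       simp [List.filter_cons, hp, wp_cons, hx, ih ht]

lemma mk_eq_wp {n : ℕ} (L : List (Fin n × Bool)) : FreeGroup.mk L = wp ltr L := by
  rw [← FreeGroup.lift_of_apply (FreeGroup.mk L), FreeGroup.lift_mk]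
  rfl

/-- the hom determined by words -/
def homOf {n m : ℕ} (w : Fin m → List (Fin n × Bool)) : FreeGroup (Fin m) →* FreeGroup (Fin n) :=
  FreeGroup.lift fun j => wp ltr (w j)

lemma homOf_of {n m : ℕ} (w : Fin m → List (Fin n × Bool)) (j : Fin m) :
    homOf w (FreeGroup.of j) = wp ltr (w j) := FreeGroup.lift_apply_of

def emb {n : ℕ} (i : Fin n) (a : Fin n) : Fin (n + 1) :=
  if (a : ℕ) ≤ (i : ℕ) then ⟨a, by omega⟩ else ⟨(a : ℕ) + 1, by omega⟩

def top {n : ℕ} (i : Fin n) : Fin (n + 1) := ⟨(i : ℕ) + 1, by omega⟩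

lemma alpha_emb (i : Fin n) (a : Fin n) :
    alphaMap n i (FreeGroup.of (emb i a)) = FreeGroup.of a := by
  rw [alphaMap, FreeGroup.lift_apply_of]
  by_cases h : (a : ℕ) ≤ (i : ℕ)
  · rw [emb, if_pos h, dif_pos (show ((⟨(a : ℕ), by omega⟩ : Fin (n+1)) : ℕ) ≤ i from h)]
  · rw [emb, if_neg h, dif_neg (show ¬ ((a : ℕ) + 1 ≤ (i : ℕ)) by omega),
      if_neg (show ¬ ((a : ℕ) + 1 = (i : ℕ) + 1) by omega)]
    exact congrArg FreeGroup.of (Fin.ext (show (a : ℕ) + 1 - 1 = a by omega))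

lemma alpha_top (i : Fin n) : alphaMap n i (FreeGroup.of (top i)) = FreeGroup.of i := by
  rw [alphaMap, FreeGroup.lift_apply_of, top,
    dif_neg (show ¬ ((i : ℕ) + 1 ≤ (i : ℕ)) by omega), if_pos rfl]

lemma beta_emb (i : Fin n) (a : Fin n) :
    betaMap n i (FreeGroup.of (emb i a)) = FreeGroup.of a := by
  rw [betaMap, FreeGroup.lift_apply_of]
  by_cases h : (a : ℕ) ≤ (i : ℕ)
  · rw [emb, if_pos h, dif_pos (show ((⟨(a : ℕ), by omega⟩ : Fin (n+1)) : ℕ) ≤ i from h)]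
  · rw [emb, if_neg h, dif_neg (show ¬ ((a : ℕ) + 1 ≤ (i : ℕ)) by omega),
      if_neg (show ¬ ((a : ℕ) + 1 = (i : ℕ) + 1) by omega)]
    exact congrArg FreeGroup.of (Fin.ext (show (a : ℕ) + 1 - 1 = a by omega))

lemma beta_top (i : Fin n) : betaMap n i (FreeGroup.of (top i)) = 1 := by
  rw [betaMap, FreeGroup.lift_apply_of, top,
    dif_neg (show ¬ ((i : ℕ) + 1 ≤ (i : ℕ)) by omega), if_pos rfl]

lemma gamma_emb (i : Fin n) (a : Fin n) :
    gammaMap n i (FreeGroup.of (emb i a)) = if a = i then 1 else FreeGroup.of a := by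
  rw [gammaMap, FreeGroup.lift_apply_of]
  rcases lt_trichotomy ((a : ℕ)) ((i : ℕ)) with h | h | h
  · rw [if_neg (show ¬ (a = i) from fun e => by subst e; omega)]
    rw [emb, if_pos (le_of_lt h), dif_pos (show ((⟨(a : ℕ), by omega⟩ : Fin (n+1)) : ℕ) < i from h)]
  · rw [if_pos (Fin.ext h)]
    rw [emb, if_pos (le_of_eq h),
      dif_neg (show ¬ ((a : ℕ) < (i : ℕ)) by omega), if_pos h]
  · rw [if_neg (show ¬ (a = i) from fun e => by subst e; omega)]
    rw [emb, if_neg (by omega), dif_neg (show ¬ ((a : ℕ) + 1 < (i : ℕ)) by omega),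
      if_neg (show ¬ ((a : ℕ) + 1 = (i : ℕ)) by omega),
      if_neg (show ¬ ((a : ℕ) + 1 = (i : ℕ) + 1) by omega)]
    exact congrArg FreeGroup.of (Fin.ext (show (a : ℕ) + 1 - 1 = a by omega))

lemma gamma_top (i : Fin n) : gammaMap n i (FreeGroup.of (top i)) = FreeGroup.of i := by
  rw [gammaMap, FreeGroup.lift_apply_of, top,
    dif_neg (show ¬ ((i : ℕ) + 1 < (i : ℕ)) by omega),
    if_neg (show ¬ ((i : ℕ) + 1 = (i : ℕ)) by omega), if_pos rfl]


/-- embedding letter map -/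
def fE {n : ℕ} (i : Fin n) (l : Fin n × Bool) : FreeGroup (Fin (n + 1)) :=
  cond l.2 (FreeGroup.of (emb i l.1)) (FreeGroup.of (emb i l.1))⁻¹

/-- letter map sending letters with base `i` to the extra generator -/
def fT {n : ℕ} (i : Fin n) (l : Fin n × Bool) : FreeGroup (Fin (n + 1)) :=
  if l.1 = i then cond l.2 (FreeGroup.of (top i)) (FreeGroup.of (top i))⁻¹ else fE i l

lemma alpha_fE (i : Fin n) (l : Fin n × Bool) : alphaMap n i (fE i l) = ltr l := by
  rcases l with ⟨a, b⟩; cases b <;> simp [fE, ltr, alpha_emb]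

lemma beta_fE (i : Fin n) (l : Fin n × Bool) : betaMap n i (fE i l) = ltr l := by
  rcases l with ⟨a, b⟩; cases b <;> simp [fE, ltr, beta_emb]

lemma gamma_fE (i : Fin n) (l : Fin n × Bool) :
    gammaMap n i (fE i l) = if l.1 = i then 1 else ltr l := by
  rcases l with ⟨a, b⟩
  by_cases h : a = i <;> cases b <;> simp [fE, ltr, gamma_emb, h]

lemma alpha_fT (i : Fin n) (l : Fin n × Bool) : alphaMap n i (fT i l) = ltr l := by
  rcases l with ⟨a, b⟩
  by_cases h : a = i
  · subst h; cases b <;> simp [fT, ltr, alpha_top]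
  · cases b <;> simp [fT, h, ltr, alpha_fE, alpha_emb]

lemma beta_fT (i : Fin n) (l : Fin n × Bool) :
    betaMap n i (fT i l) = if l.1 = i then 1 else ltr l := by
  rcases l with ⟨a, b⟩
  by_cases h : a = i
  · subst h; cases b <;> simp [fT, ltr, beta_top]
  · cases b <;> simp [fT, h, ltr, beta_fE, beta_emb]

lemma gamma_fT (i : Fin n) (l : Fin n × Bool) : gammaMap n i (fT i l) = ltr l := by
  rcases l with ⟨a, b⟩
  by_cases h : a = i
  · subst h; cases b <;> simp [fT, ltr, gamma_top]
  · cases b <;> simp [fT, h, ltr, gamma_fE, gamma_emb]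

/-- the relation elements are in `idealI` -/
lemma rel_mem (φ : FreeGroup (Fin m) →* FreeGroup (Fin (n + 1))) (i : Fin n) :
    Finsupp.single ((alphaMap n i).comp φ) (1 : k)
      - Finsupp.single ((betaMap n i).comp φ) (1 : k)
      - Finsupp.single ((gammaMap n i).comp φ) (1 : k) ∈ idealI k n m :=
  Submodule.subset_span ⟨φ, i, rfl⟩

lemma missing_mem (w : Fin m → List (Fin n × Bool)) (i : Fin n)
    (hi : ∀ j, ∀ l ∈ w j, l.1 ≠ i) :
    Finsupp.single (homOf w) (1 : k) ∈ idealI k n m := by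
  set φ : FreeGroup (Fin m) →* FreeGroup (Fin (n + 1)) :=
    FreeGroup.lift (fun j => wp (fE i) (w j)) with hφ
  have hφof : ∀ j, φ (FreeGroup.of j) = wp (fE i) (w j) := fun j => FreeGroup.lift_apply_of
  have hα : (alphaMap n i).comp φ = homOf w := by
    apply FreeGroup.ext_hom; intro j
    rw [MonoidHom.comp_apply, hφof, hom_wp, homOf_of]
    exact wp_congr (fun l _ => alpha_fE n i l)
  have hβ : (betaMap n i).comp φ = homOf w := by
    apply FreeGroup.ext_hom; intro j
    rw [MonoidHom.comp_apply, hφof, hom_wp, homOf_of]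
    exact wp_congr (fun l _ => beta_fE n i l)
  have hγ : (gammaMap n i).comp φ = homOf w := by
    apply FreeGroup.ext_hom; intro j
    rw [MonoidHom.comp_apply, hφof, hom_wp, homOf_of]
    refine wp_congr (fun l hl => ?_)
    rw [gamma_fE, if_neg (hi j l hl)]
  have key := rel_mem k n m φ i
  rw [hα, hβ, hγ] at key
  have h2 := neg_mem key
  simpa using h2


lemma step_neg (w : Fin m → List (Fin n × Bool)) (j₀ : Fin m) (i : Fin n)
    (u v : List (Fin n × Bool)) (hw : w j₀ = u ++ (i, false) :: v)
    (M : Submodule k ((FreeGroup (Fin m) →* FreeGroup (Fin n)) →₀ k))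
    (hM : idealI k n m ≤ M)
    (h1 : Finsupp.single (homOf (Function.update w j₀ (u ++ v))) (1 : k) ∈ M)
    (h2 : Finsupp.single (homOf (fun j => if j = j₀
        then (u.filter fun l => decide (l.1 ≠ i)) ++ (i, true) ::
          (v.filter fun l => decide (l.1 ≠ i))
        else ((w j).filter fun l => decide (l.1 ≠ i)))) (1 : k) ∈ M) :
    Finsupp.single (homOf w) (1 : k) ∈ M := by
  classical
  set φ : FreeGroup (Fin m) →* FreeGroup (Fin (n + 1)) :=
    FreeGroup.lift (fun j => if j = j₀
      then wp (fT i) u * (FreeGroup.of (emb i i) * (FreeGroup.of (top i))⁻¹) * wp (fT i) v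
      else wp (fT i) (w j)) with hφ
  have hφof : ∀ j, φ (FreeGroup.of j) = if j = j₀
      then wp (fT i) u * (FreeGroup.of (emb i i) * (FreeGroup.of (top i))⁻¹) * wp (fT i) v
      else wp (fT i) (w j) := fun j => FreeGroup.lift_apply_of
  have hfilt : ∀ (t : List (Fin n × Bool)), ∀ l ∈ t,
      if (fun l : Fin n × Bool => decide (l.1 ≠ i)) l
      then betaMap n i (fT i l) = ltr l else betaMap n i (fT i l) = 1 := by
    intro t l _
    by_cases h : l.1 = i <;> simp [beta_fT, h]
  have hγ : (gammaMap n i).comp φ = homOf w := by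
    apply FreeGroup.ext_hom; intro j
    rw [MonoidHom.comp_apply, hφof, homOf_of]
    by_cases hj : j = j₀
    · subst hj
      rw [if_pos rfl, hw, map_mul, map_mul, map_mul, map_inv, hom_wp, hom_wp, gamma_top,
        gamma_emb, if_pos rfl,
        wp_congr (fun l _ => gamma_fT n i l), wp_congr (fun l _ => gamma_fT n i l)]
      simp [wp_append, wp_cons, ltr, mul_assoc]
    · rw [if_neg hj, hom_wp]
      exact wp_congr (fun l _ => gamma_fT n i l)
  have hα : (alphaMap n i).comp φ = homOf (Function.update w j₀ (u ++ v)) := by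
    apply FreeGroup.ext_hom; intro j
    rw [MonoidHom.comp_apply, hφof, homOf_of]
    by_cases hj : j = j₀
    · subst hj
      rw [if_pos rfl, Function.update_self, map_mul, map_mul, map_mul, map_inv, hom_wp, hom_wp,
        alpha_top, alpha_emb,
        wp_congr (fun l _ => alpha_fT n i l), wp_congr (fun l _ => alpha_fT n i l)]
      simp [wp_append, wp_cons, ltr, mul_assoc]
    · rw [if_neg hj, Function.update_of_ne hj, hom_wp]
      exact wp_congr (fun l _ => alpha_fT n i l)
  have hβ : (betaMap n i).comp φ = homOf (fun j => if j = j₀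
      then (u.filter fun l => decide (l.1 ≠ i)) ++ (i, true) ::
        (v.filter fun l => decide (l.1 ≠ i))
      else ((w j).filter fun l => decide (l.1 ≠ i))) := by
    apply FreeGroup.ext_hom; intro j
    rw [MonoidHom.comp_apply, hφof, homOf_of]
    by_cases hj : j = j₀
    · subst hj
      rw [if_pos rfl, if_pos rfl, map_mul, map_mul, map_mul, map_inv, hom_wp, hom_wp,
        beta_top, beta_emb,
        wp_filter _ (hfilt u), wp_filter _ (hfilt v)]
      simp [wp_append, wp_cons, ltr, mul_assoc]
    · rw [if_neg hj, if_neg hj, hom_wp]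
      exact wp_filter _ (hfilt (w j))
  have key := hM (rel_mem k n m φ i)
  rw [hα, hβ, hγ] at key
  have h3 := sub_mem (sub_mem h1 h2) key
  rwa [sub_sub_cancel] at h3

lemma step_pos (w : Fin m → List (Fin n × Bool)) (j₀ : Fin m) (i : Fin n)
    (u v : List (Fin n × Bool)) (hw : w j₀ = u ++ (i, true) :: v)
    (M : Submodule k ((FreeGroup (Fin m) →* FreeGroup (Fin n)) →₀ k))
    (hM : idealI k n m ≤ M)
    (h1 : Finsupp.single (homOf (Function.update w j₀ (u ++ v))) (1 : k) ∈ M)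
    (h2 : Finsupp.single (homOf (fun j => if j = j₀
        then (u.filter fun l => decide (l.1 ≠ i)) ++ (i, true) ::
          (v.filter fun l => decide (l.1 ≠ i))
        else ((w j).filter fun l => decide (l.1 ≠ i)))) (1 : k) ∈ M) :
    Finsupp.single (homOf w) (1 : k) ∈ M := by
  classical
  set φ : FreeGroup (Fin m) →* FreeGroup (Fin (n + 1)) :=
    FreeGroup.lift (fun j => if j = j₀
      then wp (fE i) u * FreeGroup.of (top i) * wp (fE i) v
      else wp (fE i) (w j)) with hφ
  have hφof : ∀ j, φ (FreeGroup.of j) = if j = j₀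
      then wp (fE i) u * FreeGroup.of (top i) * wp (fE i) v
      else wp (fE i) (w j) := fun j => FreeGroup.lift_apply_of
  have hfilt : ∀ (t : List (Fin n × Bool)), ∀ l ∈ t,
      if (fun l : Fin n × Bool => decide (l.1 ≠ i)) l
      then gammaMap n i (fE i l) = ltr l else gammaMap n i (fE i l) = 1 := by
    intro t l _
    by_cases h : l.1 = i <;> simp [gamma_fE, h]
  have hα : (alphaMap n i).comp φ = homOf w := by
    apply FreeGroup.ext_hom; intro j
    rw [MonoidHom.comp_apply, hφof, homOf_of]
    by_cases hj : j = j₀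
    · subst hj
      rw [if_pos rfl, hw, map_mul, map_mul, hom_wp, hom_wp, alpha_top,
        wp_congr (fun l _ => alpha_fE n i l), wp_congr (fun l _ => alpha_fE n i l)]
      simp [wp_append, wp_cons, ltr, mul_assoc]
    · rw [if_neg hj, hom_wp]
      exact wp_congr (fun l _ => alpha_fE n i l)
  have hβ : (betaMap n i).comp φ = homOf (Function.update w j₀ (u ++ v)) := by
    apply FreeGroup.ext_hom; intro j
    rw [MonoidHom.comp_apply, hφof, homOf_of]
    by_cases hj : j = j₀
    · subst hj
      rw [if_pos rfl, Function.update_self, map_mul, map_mul, hom_wp, hom_wp, beta_top,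
        wp_congr (fun l _ => beta_fE n i l), wp_congr (fun l _ => beta_fE n i l)]
      simp [wp_append, wp_cons, ltr, mul_assoc]
    · rw [if_neg hj, Function.update_of_ne hj, hom_wp]
      exact wp_congr (fun l _ => beta_fE n i l)
  have hγ : (gammaMap n i).comp φ = homOf (fun j => if j = j₀
      then (u.filter fun l => decide (l.1 ≠ i)) ++ (i, true) ::
        (v.filter fun l => decide (l.1 ≠ i))
      else ((w j).filter fun l => decide (l.1 ≠ i))) := by
    apply FreeGroup.ext_hom; intro j
    rw [MonoidHom.comp_apply, hφof, homOf_of]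
    by_cases hj : j = j₀
    · subst hj
      rw [if_pos rfl, if_pos rfl, map_mul, map_mul, hom_wp, hom_wp, gamma_top,
        wp_filter _ (hfilt u), wp_filter _ (hfilt v)]
      simp [wp_append, wp_cons, ltr, mul_assoc]
    · rw [if_neg hj, if_neg hj, hom_wp]
      exact wp_filter _ (hfilt (w j))
  have key := hM (rel_mem k n m φ i)
  rw [hα, hβ, hγ] at key
  have h3 := add_mem (add_mem key h2) h1
  rwa [sub_add_cancel, sub_add_cancel] at h3


/-- weight of a word: positive letters count 1, negative letters count 2 -/
def nu {n : ℕ} (u : List (Fin n × Bool)) : ℕ := (u.map fun l => cond l.2 1 2).sum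

/-- total weight -/
def mu {n m : ℕ} (w : Fin m → List (Fin n × Bool)) : ℕ := ∑ j, nu (w j)

/-- number of occurrences of generator i -/
def cnt {n : ℕ} (i : Fin n) (u : List (Fin n × Bool)) : ℕ :=
  u.countP (fun l => decide (l.1 = i))

lemma nu_append {n : ℕ} (u v : List (Fin n × Bool)) : nu (u ++ v) = nu u + nu v := by
  simp [nu]

lemma nu_cons {n : ℕ} (x : Fin n × Bool) (u : List (Fin n × Bool)) :
    nu (x :: u) = cond x.2 1 2 + nu u := by simp [nu]

lemma nu_filter_le {n : ℕ} (p : Fin n × Bool → Bool) (u : List (Fin n × Bool)) :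
    nu (u.filter p) ≤ nu u := by
  induction u with
  | nil => simp
  | cons x t ih =>
    rw [List.filter_cons]
    by_cases h : p x = true
    · simp only [h, if_true, nu_cons]; omega
    · simp only [h, if_false, nu_cons]
      rcases x with ⟨a, b⟩; cases b <;> simp <;> omega

lemma cnt_append {n : ℕ} (i : Fin n) (u v : List (Fin n × Bool)) :
    cnt i (u ++ v) = cnt i u + cnt i v := by simp [cnt]

lemma cnt_cons {n : ℕ} (i : Fin n) (x : Fin n × Bool) (u : List (Fin n × Bool)) :
    cnt i (x :: u) = cnt i u + if x.1 = i then 1 else 0 := by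
  rw [cnt, List.countP_cons, cnt]
  by_cases h : x.1 = i <;> simp [h]

lemma nu_filter_cnt {n : ℕ} (i : Fin n) (u : List (Fin n × Bool))
    (h : ∀ l ∈ u, l.2 = true) :
    nu (u.filter fun l => decide (l.1 ≠ i)) + cnt i u = nu u := by
  induction u with
  | nil => simp [nu, cnt]
  | cons x t ih =>
    have hx : x.2 = true := h x (List.mem_cons_self)
    have ih' := ih (fun l hl => h l (List.mem_cons_of_mem x hl))
    by_cases hxi : x.1 = i
    · rw [List.filter_cons, if_neg (by simp [hxi]), nu_cons, hx, cnt_cons, if_pos hxi]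
      simp only [cond_true]
      omega
    · rw [List.filter_cons, if_pos (by simp [hxi]), nu_cons, nu_cons, cnt_cons, if_neg hxi]
      omega

lemma mu_update {n m : ℕ} (w : Fin m → List (Fin n × Bool)) (j₀ : Fin m)
    (L : List (Fin n × Bool)) :
    mu (Function.update w j₀ L) + nu (w j₀) = mu w + nu L := by
  classical
  have he : ∀ j ∈ Finset.univ.erase j₀, nu (Function.update w j₀ L j) = nu (w j) := by
    intro j hj
    rw [Function.update_of_ne (Finset.ne_of_mem_erase hj)]
  rw [mu, mu, ← Finset.add_sum_erase _ (fun j => nu (Function.update w j₀ L j))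
      (Finset.mem_univ j₀),
    ← Finset.add_sum_erase _ (fun j => nu (w j)) (Finset.mem_univ j₀),
    Function.update_self, Finset.sum_congr rfl he]
  ring

lemma cnt_pos_exists {n : ℕ} (i : Fin n) (u : List (Fin n × Bool)) (h : 0 < cnt i u) :
    ∃ l ∈ u, l.1 = i := by
  rw [cnt, List.countP_pos_iff] at h
  obtain ⟨l, hl, hi⟩ := h
  exact ⟨l, hl, by simpa using hi⟩


lemma wp_ltr_pos {n : ℕ} (u : List (Fin n × Bool)) (h : ∀ l ∈ u, l.2 = true) :
    wp ltr u = ((u.map Prod.fst).map FreeGroup.of).prod := by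
  induction u with
  | nil => rfl
  | cons x t ih =>
    have hx := h x (List.mem_cons_self)
    rw [wp_cons, List.map_cons, List.map_cons, List.prod_cons,
      ih (fun l hl => h l (List.mem_cons_of_mem x hl))]
    rcases x with ⟨a, b⟩
    simp only at hx
    subst hx
    rfl

lemma count_map_fst {n : ℕ} (u : List (Fin n × Bool)) (a : Fin n) :
    (u.map Prod.fst).count a = cnt a u := by
  induction u with
  | nil => rfl
  | cons x t ih =>
    rw [List.map_cons, List.count_cons, cnt_cons, ih]
    by_cases h : x.1 = a <;> simp [h]

lemma count_flat {n m : ℕ} (w : Fin m → List (Fin n × Bool)) (a : Fin n) :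
    (List.ofFn fun j => (w j).map Prod.fst).flatten.count a = ∑ j, cnt a (w j) := by
  rw [List.count_flatten, List.map_ofFn, List.sum_ofFn]
  exact Finset.sum_congr rfl (fun j _ => count_map_fst (w j) a)

lemma main_mem : ∀ (N : ℕ) (w : Fin m → List (Fin n × Bool)), mu w ≤ N →
    Finsupp.single (homOf w) (1 : k) ∈
      idealI k n m ⊔ Submodule.span k
        ((fun ρ : FreeGroup (Fin m) →* FreeGroup (Fin n) =>
          Finsupp.single ρ (1 : k)) '' setE n m) := by
  intro N
  induction N using Nat.strong_induction_on with
  | _ N ih =>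
    intro w hN
    by_cases hneg : ∃ j₀, ∃ l ∈ w j₀, l.2 = false
    · obtain ⟨j₀, ⟨a, b⟩, hl, hb⟩ := hneg
      simp only at hb
      subst hb
      obtain ⟨u, v, hw⟩ := List.append_of_mem hl
      have hnu : nu (w j₀) = nu u + (2 + nu v) := by
        rw [hw, nu_append, nu_cons]; rfl
      apply step_neg k n m w j₀ a u v hw _ le_sup_left
      · have e1 := mu_update w j₀ (u ++ v)
        rw [nu_append] at e1
        exact ih (mu (Function.update w j₀ (u ++ v))) (by omega) _ le_rfl
      · set wB := fun j => if j = j₀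
          then (u.filter fun l => decide (l.1 ≠ a)) ++ (a, true) ::
            (v.filter fun l => decide (l.1 ≠ a))
          else ((w j).filter fun l => decide (l.1 ≠ a)) with hwB
        have hwBj : ∀ j, wB j = if j = j₀
            then (u.filter fun l => decide (l.1 ≠ a)) ++ (a, true) ::
              (v.filter fun l => decide (l.1 ≠ a))
            else ((w j).filter fun l => decide (l.1 ≠ a)) := fun j => rfl
        have hj₀B : nu (wB j₀) < nu (w j₀) := by
          rw [hwBj j₀, if_pos rfl, nu_append, nu_cons, hnu]
          have h1 := nu_filter_le (fun l => decide (l.1 ≠ a)) u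
          have h2 := nu_filter_le (fun l => decide (l.1 ≠ a)) v
          simp only [cond_true]
          omega
        have hlt : mu wB < mu w := by
          rw [mu, mu]
          apply Finset.sum_lt_sum
          · intro j _
            by_cases hj : j = j₀
            · subst hj; exact le_of_lt hj₀B
            · rw [hwBj j, if_neg hj]
              exact nu_filter_le _ _
          · exact ⟨j₀, Finset.mem_univ _, hj₀B⟩
        exact ih (mu wB) (by omega) _ le_rfl
    · push_neg at hneg
      have hpos : ∀ j, ∀ l ∈ w j, l.2 = true := by
        intro j l hl
        have := hneg j l hl
        simpa using this
      by_cases hmiss : ∃ i : Fin n, ∀ j, ∀ l ∈ w j, l.1 ≠ i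
      · obtain ⟨i, hi⟩ := hmiss
        exact Submodule.mem_sup_left (missing_mem k n m w i hi)
      · push_neg at hmiss
        by_cases hbig : ∃ i : Fin n, 2 ≤ ∑ j, cnt i (w j)
        · obtain ⟨i, hi2⟩ := hbig
          have hex : ∃ j₀, 0 < cnt i (w j₀) := by
            by_contra hc
            push_neg at hc
            have : ∑ j, cnt i (w j) = 0 :=
              Finset.sum_eq_zero (fun j _ => Nat.le_zero.mp (hc j))
            omega
          obtain ⟨j₀, hj₀⟩ := hex
          obtain ⟨⟨a, b⟩, hl, hli⟩ := cnt_pos_exists i (w j₀) hj₀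
          simp only at hli
          subst hli
          have hb := hpos j₀ _ hl
          simp only at hb
          subst hb
          obtain ⟨u, v, hw⟩ := List.append_of_mem hl
          have hu2 : ∀ l ∈ u, l.2 = true := by
            intro l hlu
            apply hpos j₀ l
            rw [hw]
            exact List.mem_append_left _ hlu
          have hv2 : ∀ l ∈ v, l.2 = true := by
            intro l hlv
            apply hpos j₀ l
            rw [hw]
            exact List.mem_append_right _ (List.mem_cons_of_mem _ hlv)
          have hnu : nu (w j₀) = nu u + (1 + nu v) := by
            rw [hw, nu_append, nu_cons]; rfl
          apply step_pos k n m w j₀ a u v hw _ le_sup_left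
          · have e1 := mu_update w j₀ (u ++ v)
            rw [nu_append] at e1
            exact ih (mu (Function.update w j₀ (u ++ v))) (by omega) _ le_rfl
          · set wG := fun j => if j = j₀
              then (u.filter fun l => decide (l.1 ≠ a)) ++ (a, true) ::
                (v.filter fun l => decide (l.1 ≠ a))
              else ((w j).filter fun l => decide (l.1 ≠ a)) with hwG
            have hwGj : ∀ j, wG j = if j = j₀
                then (u.filter fun l => decide (l.1 ≠ a)) ++ (a, true) ::
                  (v.filter fun l => decide (l.1 ≠ a))
                else ((w j).filter fun l => decide (l.1 ≠ a)) := fun j => rfl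
            have key : ∀ j ∈ Finset.univ.erase j₀,
                nu (wG j) + cnt a (w j) = nu (w j) := by
              intro j hj
              rw [hwGj j, if_neg (Finset.ne_of_mem_erase hj)]
              exact nu_filter_cnt a (w j) (hpos j)
            have keyj₀ : nu (wG j₀) + (cnt a u + cnt a v) = nu (w j₀) := by
              rw [hwGj j₀, if_pos rfl, nu_append, nu_cons, hnu]
              have h1 := nu_filter_cnt a u hu2
              have h2 := nu_filter_cnt a v hv2
              simp only [cond_true]
              omega
            have hsum1 : mu wG = nu (wG j₀) + ∑ j ∈ Finset.univ.erase j₀, nu (wG j) :=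
              (Finset.add_sum_erase _ _ (Finset.mem_univ j₀)).symm
            have hsum2 : mu w = nu (w j₀) + ∑ j ∈ Finset.univ.erase j₀, nu (w j) :=
              (Finset.add_sum_erase _ _ (Finset.mem_univ j₀)).symm
            have hsum3 : ∑ j ∈ Finset.univ.erase j₀, nu (wG j)
                + ∑ j ∈ Finset.univ.erase j₀, cnt a (w j)
                = ∑ j ∈ Finset.univ.erase j₀, nu (w j) := by
              rw [← Finset.sum_add_distrib]
              exact Finset.sum_congr rfl key
            have hcnt : cnt a (w j₀) = cnt a u + cnt a v + 1 := by
              rw [hw, cnt_append, cnt_cons, if_pos rfl]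
              omega
            have hsum4 : ∑ j, cnt a (w j)
                = cnt a (w j₀) + ∑ j ∈ Finset.univ.erase j₀, cnt a (w j) :=
              (Finset.add_sum_erase _ _ (Finset.mem_univ j₀)).symm
            have hlt : mu wG < mu w := by omega
            exact ih (mu wG) (by omega) _ le_rfl
        · push_neg at hbig
          have hone : ∀ i : Fin n, ∑ j, cnt i (w j) = 1 := by
            intro i
            have hle := hbig i
            obtain ⟨j, l, hl, hli⟩ := hmiss i
            have h1 : 0 < cnt i (w j) := by
              rw [cnt, List.countP_pos_iff]
              exact ⟨l, hl, by simpa using hli⟩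
            have h2 : cnt i (w j) ≤ ∑ j', cnt i (w j') :=
              Finset.single_le_sum (f := fun j' => cnt i (w j'))
                (fun j' _ => Nat.zero_le _) (Finset.mem_univ j)
            omega
          have hE : homOf w ∈ setE n m := by
            refine ⟨fun j => (w j).map Prod.fst, fun j => ?_, ?_⟩
            · rw [homOf_of, wp_ltr_pos _ (hpos j)]
            · rw [List.perm_iff_count]
              intro a
              rw [count_flat, hone a,
                List.count_eq_one_of_mem (List.nodup_finRange n) (List.mem_finRange a)]
          exact Submodule.mem_sup_right (Submodule.subset_span
            (Set.mem_image_of_mem _ hE))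


/-- Every element of `k·gr^op(n,m)` is, modulo the left ideal `I(n,m)`, a `k`-linear
combination of homomorphisms sending the generators to positive words in which each
generator occurs exactly once; i.e. `k·gr^op(n,m) = I(n,m) + span(E)`. -/
theorem stmt18 :
    idealI k n m ⊔ Submodule.span k
      ((fun ρ : FreeGroup (Fin m) →* FreeGroup (Fin n) => Finsupp.single ρ (1 : k)) '' setE n m)
      = ⊤ := by
  rw [eq_top_iff]
  rintro x -
  induction x using Finsupp.induction with
  | zero => exact zero_mem _
  | single_add a b f _ _ ih =>
    refine add_mem ?_ ih
    have hb : Finsupp.single a b = b • Finsupp.single a (1 : k) := by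
      rw [Finsupp.smul_single, smul_eq_mul, mul_one]
    rw [hb]
    apply Submodule.smul_mem
    obtain ⟨w, hwa⟩ : ∃ w : Fin m → List (Fin n × Bool), homOf w = a := by
      refine ⟨fun j => (a (FreeGroup.of j)).toWord, ?_⟩
      apply FreeGroup.ext_hom
      intro j
      rw [homOf_of, ← mk_eq_wp, FreeGroup.mk_toWord]
    rw [← hwa]
    exact main_mem k n m (mu w) w le_rfl

end Stmt18
end
end
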